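/- Heat-trace identity relating Tetra to its torus cover and to circles (the 'effective one-dimensionality' K_Tetra − (1/4)K_TwoTall = K_{ℝ/(1/2)ℤ} − (1/4)K_{ℝ/2ℤ}): for every real t > 0, (∑'_{μ ∈ ℝ} m_T(μ) · exp(−4π²μt)) − (1/4) · ∑'_{(a,b,c) ∈ ℤ³} exp(−4π²(a² + b² + c²/4)t) = (∑'_{n ∈ ℤ} exp(−16π²n²t)) − (1/4) · ∑'_{n ∈ ℤ} exp(−π²n²t), where all sums are tsums and the left-hand tsum over μ ∈ ℝ has countable support and is summable. -/

import Mathlib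

noncomputable section

open Real

/-- Points of `ℝ³`, written as `(x, y, z)`. -/
abbrev R3 : Type := ℝ × ℝ × ℝ

/-- The space of functions `ℝ³ → ℂ`. -/
abbrev FunSp : Type := R3 → ℂ

/-- `φ_{(a,b,c)}(x,y,z) = exp(2πi(ax+by+cz))`. -/
noncomputable def phi (a b c : ℝ) : FunSp :=
  fun p => Complex.exp (2 * (Real.pi : ℂ) * Complex.I *
    ((a : ℂ) * (p.1 : ℂ) + (b : ℂ) * (p.2.1 : ℂ) + (c : ℂ) * (p.2.2 : ℂ)))

/-- `τ(x,y,z) = (−y, x, z+1/2)`. -/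
def tauMap : R3 → R3 := fun p => (-p.2.1, p.1, p.2.2 + 1/2)

/-- `ρ_x(x,y,z) = (x+1/2, −y, −z)`. -/
def rhoxMap : R3 → R3 := fun p => (p.1 + 1/2, -p.2.1, -p.2.2)

/-- `ρ_y(x,y,z) = (−x, y+1/2, 1−z)`. -/
def rhoyMap : R3 → R3 := fun p => (-p.1, p.2.1 + 1/2, 1 - p.2.2)

/-- `ρ_z(x,y,z) = (1/2−x, 1/2−y, z+1)`. -/
def rhozMap : R3 → R3 := fun p => (1/2 - p.1, 1/2 - p.2.1, p.2.2 + 1)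

/-- The Tetra symmetrization `σ^T f = (1/4)(f + f∘τ + f∘τ∘τ + f∘τ∘τ∘τ)`. -/
noncomputable def sigmaT : FunSp →ₗ[ℂ] FunSp :=
  (4⁻¹ : ℂ) • (LinearMap.id + LinearMap.funLeft ℂ ℂ tauMap
    + LinearMap.funLeft ℂ ℂ (tauMap ∘ tauMap)
    + LinearMap.funLeft ℂ ℂ (tauMap ∘ tauMap ∘ tauMap))

/-- The Didi symmetrization `σ^D f = (1/4)(f + f∘ρ_x + f∘ρ_y + f∘ρ_z)`. -/
noncomputable def sigmaD : FunSp →ₗ[ℂ] FunSp :=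
  (4⁻¹ : ℂ) • (LinearMap.id + LinearMap.funLeft ℂ ℂ rhoxMap
    + LinearMap.funLeft ℂ ℂ rhoyMap + LinearMap.funLeft ℂ ℂ rhozMap)

/-- `V_{a,b,c}`: the ℂ-span of the 16 functions `φ_{(±a,±b,±c)}`, `φ_{(±b,±a,±c)}`. -/
def Vspace (a b c : ℝ) : Submodule ℂ FunSp :=
  Submodule.span ℂ {f | ∃ s₁ s₂ s₃ : ℝ,
    s₁ ∈ ({1, -1} : Set ℝ) ∧ s₂ ∈ ({1, -1} : Set ℝ) ∧ s₃ ∈ ({1, -1} : Set ℝ) ∧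
    (f = phi (s₁ * a) (s₂ * b) (s₃ * c) ∨ f = phi (s₁ * b) (s₂ * a) (s₃ * c))}

end

/-- `E_μ`: the ℂ-span of the `φ_{(a,b,c)}` with `(a,b,c) ∈ ℤ × ℤ × (1/2)ℤ` and
`a² + b² + c² = μ`. -/
noncomputable def Espace (μ : ℝ) : Submodule ℂ FunSp :=
  Submodule.span ℂ {f | ∃ a b c : ℝ, (∃ m : ℤ, a = (m : ℝ)) ∧ (∃ m : ℤ, b = (m : ℝ)) ∧
    (∃ m : ℤ, c = (m : ℝ) / 2) ∧ a ^ 2 + b ^ 2 + c ^ 2 = μ ∧ f = phi a b c}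

/-- The subspace of functions invariant under `τ` (i.e. `f ∘ τ = f`). -/
noncomputable def fixT : Submodule ℂ FunSp :=
  LinearMap.eqLocus (LinearMap.funLeft ℂ ℂ tauMap) LinearMap.id

/-- The subspace of functions invariant under `ρ_x`. -/
noncomputable def fixX : Submodule ℂ FunSp :=
  LinearMap.eqLocus (LinearMap.funLeft ℂ ℂ rhoxMap) LinearMap.id

/-- The subspace of functions invariant under `ρ_y`. -/
noncomputable def fixY : Submodule ℂ FunSp :=
  LinearMap.eqLocus (LinearMap.funLeft ℂ ℂ rhoyMap) LinearMap.id

/-- The spectral multiplicity function of Tetra: `m_T(μ)` is the dimension of the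
`τ`-invariant part of `E_μ`, so that `4π²μ` runs over the Laplace eigenvalues of Tetra
with multiplicity `m_T(μ)`. -/
noncomputable def mT (μ : ℝ) : ℕ := Module.finrank ℂ ↥(Espace μ ⊓ fixT)


noncomputable section
namespace HTI
set_option linter.dupNamespace false
open Real
set_option linter.dupNamespace false

/-- The character as a monoid hom on `Multiplicative R3`. -/
def chHom (a b c : ℝ) : Multiplicative R3 →* ℂ where
  toFun p := Complex.exp (2 * (Real.pi : ℂ) * Complex.I *
    ((a : ℂ) * ((Multiplicative.toAdd p).1 : ℂ) + (b : ℂ) * ((Multiplicative.toAdd p).2.1 : ℂ)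
      + (c : ℂ) * ((Multiplicative.toAdd p).2.2 : ℂ)))
  map_one' := by
    simp only [toAdd_one]
    norm_num
  map_mul' p q := by
    rw [← Complex.exp_add]
    congr 1
    simp only [toAdd_mul, Prod.fst_add, Prod.snd_add, Complex.ofReal_add]
    ring

lemma phi_eq_chHom (a b c : ℝ) : phi a b c = ⇑(chHom a b c) := rfl

noncomputable def Φ (w : ℤ × ℤ × ℤ) : FunSp := phi (w.1 : ℝ) (w.2.1 : ℝ) ((w.2.2 : ℝ)/2)

lemma exp_inj_aux {a b : ℝ} (h : ∀ x : ℝ, Complex.exp (2 * (Real.pi:ℂ) * Complex.I * ((a:ℂ) * x))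
    = Complex.exp (2 * (Real.pi:ℂ) * Complex.I * ((b:ℂ) * x))) : a = b := by
  by_contra hne
  have hd : a - b ≠ 0 := sub_ne_zero.mpr hne
  set x : ℝ := 1/(4*(a-b)) with hxdef
  have hx := h x
  rw [Complex.exp_eq_exp_iff_exists_int] at hx
  obtain ⟨n, hn⟩ := hx
  have hπ : (2 * (Real.pi:ℂ) * Complex.I) ≠ 0 := by
    simp [Real.pi_ne_zero, Complex.I_ne_zero]
  have h2 : 2 * (Real.pi:ℂ) * Complex.I * (((a * x - b * x - n : ℝ)) : ℂ) = 0 := by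
    push_cast
    linear_combination hn
  have h3 : ((a * x - b * x - n : ℝ) : ℂ) = 0 := by
    rcases mul_eq_zero.mp h2 with h | h
    · exact absurd h hπ
    · exact h
  have h4 : a * x - b * x - n = 0 := by exact_mod_cast h3
  have h5 : (a - b) * x = n := by linarith
  rw [hxdef] at h5
  have h7 : ((n:ℝ)*4 - 1) * (a - b) = 0 := by
    field_simp at h5
    linear_combination (b - a) * h5
  have h6 : (n : ℝ) * 4 = 1 := by
    rcases mul_eq_zero.mp h7 with h | h
    · linarith
    · exact absurd h hd
  have : (n * 4 : ℤ) = 1 := by exact_mod_cast h6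
  omega

set_option maxHeartbeats 1000000 in
lemma phi_linearIndependent : LinearIndependent ℂ Φ := by
  have h1 := linearIndependent_monoidHom (Multiplicative R3) ℂ
  have hinj : Function.Injective (fun w : ℤ × ℤ × ℤ =>
      chHom (w.1 : ℝ) (w.2.1 : ℝ) ((w.2.2 : ℝ)/2)) := by
    intro w w' h
    simp only at h
    have hfun : ∀ p : R3, phi (w.1:ℝ) (w.2.1:ℝ) ((w.2.2:ℝ)/2) p
        = phi (w'.1:ℝ) (w'.2.1:ℝ) ((w'.2.2:ℝ)/2) p := by
      intro p
      exact DFunLike.congr_fun h p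
    have h1 : (w.1 : ℝ) = (w'.1 : ℝ) := by
      apply exp_inj_aux
      intro x
      have := hfun (x, 0, 0)
      simpa [phi] using this
    have h2 : (w.2.1 : ℝ) = (w'.2.1 : ℝ) := by
      apply exp_inj_aux
      intro x
      have := hfun (0, x, 0)
      simpa [phi] using this
    have h3 : ((w.2.2 : ℝ)/2) = ((w'.2.2 : ℝ)/2) := by
      apply exp_inj_aux
      intro x
      have := hfun (0, 0, x)
      simpa [phi] using this
    have e1 : w.1 = w'.1 := by exact_mod_cast h1
    have e2 : w.2.1 = w'.2.1 := by exact_mod_cast h2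
    have e3 : w.2.2 = w'.2.2 := by
      have : (w.2.2 : ℝ) = (w'.2.2 : ℝ) := by linarith
      exact_mod_cast this
    exact Prod.ext e1 (Prod.ext e2 e3)
  exact h1.comp _ hinj




def Rrot : ℤ × ℤ × ℤ → ℤ × ℤ × ℤ := fun w => (w.2.1, -w.1, w.2.2)

lemma rrot_inj : Function.Injective Rrot := by
  intro w w' h
  simp only [Rrot, Prod.mk.injEq] at h
  refine Prod.ext (by omega) (Prod.ext (by omega) h.2.2)

noncomputable def nrm (w : ℤ × ℤ × ℤ) : ℝ := (w.1 : ℝ)^2 + (w.2.1 : ℝ)^2 + ((w.2.2 : ℝ)/2)^2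

noncomputable def eps (w : ℤ × ℤ × ℤ) : ℂ := Complex.I ^ w.2.2

def Kset : Set (ℤ × ℤ × ℤ) :=
  {w | (w.1 = 0 ∧ w.2.1 = 0 ∧ (4:ℤ) ∣ w.2.2) ∨ (0 < w.1 ∧ 0 ≤ w.2.1)}

lemma rrot_iter_one (w : ℤ × ℤ × ℤ) : Rrot^[1] w = (w.2.1, -w.1, w.2.2) := rfl
lemma rrot_iter_two (w : ℤ × ℤ × ℤ) : Rrot^[2] w = (-w.1, -w.2.1, w.2.2) := rfl
lemma rrot_iter_three (w : ℤ × ℤ × ℤ) : Rrot^[3] w = (-w.2.1, w.1, w.2.2) := by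
  simp only [Function.iterate_succ_apply, Function.iterate_zero_apply, Rrot, neg_neg]
lemma rrot_iter_four (w : ℤ × ℤ × ℤ) : Rrot^[4] w = w := by
  simp only [Function.iterate_succ_apply, Function.iterate_zero_apply, Rrot, neg_neg]

lemma nrm_rrot (w : ℤ × ℤ × ℤ) : nrm (Rrot w) = nrm w := by
  simp only [nrm, Rrot]
  push_cast
  ring

lemma nrm_rrot_iter (j : ℕ) (w : ℤ × ℤ × ℤ) : nrm (Rrot^[j] w) = nrm w := by
  induction j with
  | zero => rfl
  | succ n ih => rw [Function.iterate_succ_apply', nrm_rrot, ih]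

lemma snd_rrot_iter (j : ℕ) (w : ℤ × ℤ × ℤ) : (Rrot^[j] w).2.2 = w.2.2 := by
  induction j with
  | zero => rfl
  | succ n ih => rw [Function.iterate_succ_apply']; exact ih

lemma eps_rrot_iter (j : ℕ) (w : ℤ × ℤ × ℤ) : eps (Rrot^[j] w) = eps w := by
  simp [eps, snd_rrot_iter]

/-- Uniqueness of rotational representatives. -/
lemma rep_unique {k k' : ℤ × ℤ × ℤ} (hk : 0 < k.1 ∧ 0 ≤ k.2.1) (hk' : 0 < k'.1 ∧ 0 ≤ k'.2.1)
    {i j : ℕ} (hi : i < 4) (hj : j < 4) (h : Rrot^[i] k = Rrot^[j] k') : i = j ∧ k = k' := by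
  obtain ⟨a, b, m⟩ := k
  obtain ⟨a', b', m'⟩ := k'
  simp only at hk hk'
  interval_cases i <;> interval_cases j <;>
    simp only [Function.iterate_zero_apply, rrot_iter_one, rrot_iter_two, rrot_iter_three,
      Prod.mk.injEq] at h <;>
    refine ⟨by omega, ?_⟩ <;>
    · simp only [Prod.mk.injEq]
      omega

/-- Existence of rotational representatives. -/
lemma rep_exists {x : ℤ × ℤ × ℤ} (hx : ¬(x.1 = 0 ∧ x.2.1 = 0)) :
    ∃ k, (0 < k.1 ∧ 0 ≤ k.2.1) ∧ ∃ j < 4, Rrot^[j] k = x := by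
  obtain ⟨a, b, m⟩ := x
  simp only at hx
  by_cases h0 : 0 < a ∧ 0 ≤ b
  · exact ⟨(a, b, m), h0, 0, by norm_num⟩
  by_cases h1 : b < 0 ∧ 0 ≤ a
  · refine ⟨(-b, a, m), ⟨show 0 < -b by omega, show 0 ≤ a by omega⟩, 1, by norm_num, ?_⟩
    rw [rrot_iter_one]
    simp only [neg_neg]
  by_cases h2 : a < 0 ∧ b ≤ 0
  · refine ⟨(-a, -b, m), ⟨show 0 < -a by omega, show 0 ≤ -b by omega⟩, 2, by norm_num, ?_⟩
    rw [rrot_iter_two]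
    simp only [neg_neg]
  · refine ⟨(b, -a, m), ⟨show 0 < b by omega, show 0 ≤ -a by omega⟩, 3, by norm_num, ?_⟩
    rw [rrot_iter_three]
    simp only [neg_neg]

/-- An orbit of a rotational representative never meets the axis. -/
lemma orbit_not_axis {k : ℤ × ℤ × ℤ} (hk : 0 < k.1) {j : ℕ} (hj : j < 4) :
    ¬((Rrot^[j] k).1 = 0 ∧ (Rrot^[j] k).2.1 = 0) := by
  obtain ⟨a, b, m⟩ := k
  simp only at hk
  interval_cases j <;>
    simp only [Function.iterate_zero_apply, rrot_iter_one, rrot_iter_two, rrot_iter_three] <;>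
    omega

lemma I_zpow_four_mul (m : ℤ) : Complex.I ^ (4 * m) = 1 := by
  have h4 : Complex.I ^ (4:ℤ) = 1 := by
    rw [show (4:ℤ) = ((4:ℕ):ℤ) from rfl, zpow_natCast, Complex.I_pow_four]
  rw [zpow_mul, h4, one_zpow]

lemma I_zpow_eq_one_iff {m : ℤ} : Complex.I ^ m = 1 ↔ (4:ℤ) ∣ m := by
  constructor
  · intro h
    have hm : m = 4 * (m / 4) + m % 4 := (Int.mul_ediv_add_emod m 4).symm
    have hr : Complex.I ^ (m % 4) = 1 := by
      rw [hm, zpow_add₀ Complex.I_ne_zero, I_zpow_four_mul, one_mul] at h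
      exact h
    have h4 : m % 4 = 0 ∨ m % 4 = 1 ∨ m % 4 = 2 ∨ m % 4 = 3 := by omega
    rcases h4 with h' | h' | h' | h'
    · omega
    · exfalso
      rw [h', zpow_one] at hr
      have := congrArg Complex.im hr
      simp at this
    · exfalso
      rw [h', show (2:ℤ) = ((2:ℕ):ℤ) from rfl, zpow_natCast, Complex.I_sq] at hr
      have := congrArg Complex.re hr
      norm_num at this
    · exfalso
      rw [h', show (3:ℤ) = ((3:ℕ):ℤ) from rfl, zpow_natCast] at hr
      have h3 : Complex.I ^ (3:ℕ) = -Complex.I := by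
        rw [pow_succ, Complex.I_sq]
        ring
      rw [h3] at hr
      have := congrArg Complex.im hr
      simp at this
  · rintro ⟨c, rfl⟩
    exact I_zpow_four_mul c

lemma eps_ne_zero (w : ℤ × ℤ × ℤ) : eps w ≠ 0 := zpow_ne_zero _ Complex.I_ne_zero

lemma eps_pow_four (w : ℤ × ℤ × ℤ) : eps w ^ 4 = 1 := by
  rw [eps, ← zpow_natCast (Complex.I ^ w.2.2) 4, ← zpow_mul, mul_comm]
  exact I_zpow_four_mul _


lemma eps_exp (w : ℤ × ℤ × ℤ) :
    eps w = Complex.exp ((w.2.2 : ℂ) * ((Real.pi : ℂ) * Complex.I / 2)) := by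
  rw [eps, Complex.exp_int_mul]
  congr 1
  have h : (Real.pi : ℂ) * Complex.I / 2 = ((Real.pi / 2 : ℝ) : ℂ) * Complex.I := by
    push_cast; ring
  rw [h, Complex.exp_mul_I, ← Complex.ofReal_cos, ← Complex.ofReal_sin,
    Real.cos_pi_div_two, Real.sin_pi_div_two]
  simp

lemma phi_comp_tau (w : ℤ × ℤ × ℤ) : (Φ w) ∘ tauMap = eps w • Φ (Rrot w) := by
  funext p
  simp only [Function.comp_apply, Pi.smul_apply, smul_eq_mul, Φ, phi, tauMap, Rrot, eps_exp]
  rw [← Complex.exp_add]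
  congr 1
  push_cast
  ring

lemma espace_eq (μ : ℝ) : Espace μ = Submodule.span ℂ (Φ '' {w | nrm w = μ}) := by
  refine congrArg (Submodule.span ℂ) ?_
  ext f
  constructor
  · rintro ⟨a, b, c, ⟨m₁, rfl⟩, ⟨m₂, rfl⟩, ⟨m₃, rfl⟩, hn, rfl⟩
    exact ⟨(m₁, m₂, m₃), hn, rfl⟩
  · rintro ⟨w, hw, rfl⟩
    exact ⟨_, _, _, ⟨w.1, rfl⟩, ⟨w.2.1, rfl⟩, ⟨w.2.2, rfl⟩, hw, rfl⟩

lemma mem_fixT {f : FunSp} : f ∈ fixT ↔ f ∘ tauMap = f := Iff.rfl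

noncomputable def coefF (w : ℤ × ℤ × ℤ) : (ℤ × ℤ × ℤ) →₀ ℂ :=
  if w.1 = 0 ∧ w.2.1 = 0 then Finsupp.single w 1
  else ∑ j ∈ Finset.range 4, Finsupp.single (Rrot^[j] w) (eps w ^ j)

noncomputable def Bfun (w : ℤ × ℤ × ℤ) : FunSp := Finsupp.linearCombination ℂ Φ (coefF w)

lemma axis_orbit_iter {k : ℤ × ℤ × ℤ} (hax : k.1 = 0 ∧ k.2.1 = 0) (j : ℕ) :
    Rrot^[j] k = k := by
  induction j with
  | zero => rfl
  | succ n ih =>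
    rw [Function.iterate_succ_apply', ih]
    obtain ⟨a, b, m⟩ := k
    simp only at hax
    obtain ⟨rfl, rfl⟩ := hax
    simp [Rrot]

lemma coef_spt {k x : ℤ × ℤ × ℤ} (h : coefF k x ≠ 0) : ∃ j < 4, Rrot^[j] k = x := by
  unfold coefF at h
  split_ifs at h with hax
  · refine ⟨0, by norm_num, ?_⟩
    rw [Finsupp.single_apply] at h
    by_cases hkx : k = x
    · simpa using hkx
    · simp [hkx] at h
  · rw [Finset.sum_apply'] at h
    obtain ⟨j, hj, hjne⟩ := Finset.exists_ne_zero_of_sum_ne_zero h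
    refine ⟨j, Finset.mem_range.mp hj, ?_⟩
    rw [Finsupp.single_apply] at hjne
    by_cases hkx : Rrot^[j] k = x
    · exact hkx
    · simp [hkx] at hjne

lemma kset_rot {k : ℤ × ℤ × ℤ} (hk : k ∈ Kset) (hax : ¬(k.1 = 0 ∧ k.2.1 = 0)) :
    0 < k.1 ∧ 0 ≤ k.2.1 := by
  rcases hk with h | h
  · exact absurd ⟨h.1, h.2.1⟩ hax
  · exact h

lemma coef_self {k : ℤ × ℤ × ℤ} (hk : k ∈ Kset) : coefF k k = 1 := by
  unfold coefF
  split_ifs with hax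
  · simp
  · have hkrot := kset_rot hk hax
    rw [Finset.sum_apply']
    rw [Finset.sum_eq_single 0]
    · simp
    · intro j hj hne
      rw [Finsupp.single_apply, if_neg]
      intro he
      exact hne (rep_unique hkrot hkrot (Finset.mem_range.mp hj) (by norm_num)
        (by simpa using he)).1
    · intro h
      exact absurd (Finset.mem_range.mpr (by norm_num)) h

lemma coef_other {k x : ℤ × ℤ × ℤ} (hk : k ∈ Kset) (hx : x ∈ Kset) (hne : k ≠ x) :
    coefF k x = 0 := by
  by_contra h
  obtain ⟨j, hj, hjx⟩ := coef_spt h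
  rcases hk with hk' | hk'
  · rw [axis_orbit_iter ⟨hk'.1, hk'.2.1⟩ j] at hjx
    exact hne hjx
  · rcases hx with hx' | hx'
    · exact orbit_not_axis hk'.1 hj (by rw [hjx]; exact ⟨hx'.1, hx'.2.1⟩)
    · obtain ⟨hj0, hkx⟩ := rep_unique hk' hx' hj (show 0 < 4 by norm_num) (by simpa using hjx)
      exact hne hkx

lemma coef_rot_apply {k : ℤ × ℤ × ℤ} (hk : 0 < k.1 ∧ 0 ≤ k.2.1) {j : ℕ} (hj : j < 4) :
    coefF k (Rrot^[j] k) = eps k ^ j := by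
  unfold coefF
  rw [if_neg (by intro h; omega)]
  rw [Finset.sum_apply']
  rw [Finset.sum_eq_single j]
  · simp
  · intro j' hj' hne
    rw [Finsupp.single_apply, if_neg]
    intro he
    exact hne (rep_unique hk hk (Finset.mem_range.mp hj') hj he).1
  · intro h
    exact absurd (Finset.mem_range.mpr hj) h

lemma Bfun_espace {μ : ℝ} {k : ℤ × ℤ × ℤ} (hnrm : nrm k = μ) : Bfun k ∈ Espace μ := by
  rw [espace_eq]
  unfold Bfun coefF
  split_ifs with hax
  · rw [Finsupp.linearCombination_single, one_smul]
    refine Submodule.subset_span ?_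
    exact ⟨k, hnrm, rfl⟩
  · rw [map_sum]
    refine Submodule.sum_mem _ (fun j _ => ?_)
    rw [Finsupp.linearCombination_single]
    refine Submodule.smul_mem _ _ (Submodule.subset_span ⟨Rrot^[j] k, ?_, rfl⟩)
    rw [Set.mem_setOf_eq, nrm_rrot_iter, hnrm]

lemma Bfun_tau {k : ℤ × ℤ × ℤ} (hk : k ∈ Kset) : (Bfun k) ∘ tauMap = Bfun k := by
  unfold Bfun coefF
  split_ifs with hax
  · rw [Finsupp.linearCombination_single, one_smul, phi_comp_tau]
    have hk4 : (4:ℤ) ∣ k.2.2 := by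
      rcases hk with h | h
      · exact h.2.2
      · have h1 := h.1
        exact absurd hax.1 (by omega)
    have hR : Rrot k = k := axis_orbit_iter hax 1
    have hE : eps k = 1 := I_zpow_eq_one_iff.mpr hk4
    rw [hR, hE, one_smul]
  · rw [map_sum]
    simp only [Finsupp.linearCombination_single]
    have hcomp : (∑ j ∈ Finset.range 4, eps k ^ j • Φ (Rrot^[j] k)) ∘ tauMap
        = ∑ j ∈ Finset.range 4, eps k ^ j • ((Φ (Rrot^[j] k)) ∘ tauMap) := by
      funext p
      simp [Finset.sum_apply]
    rw [hcomp]
    have hterm : ∀ j ∈ Finset.range 4, eps k ^ j • ((Φ (Rrot^[j] k)) ∘ tauMap)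
        = eps k ^ (j+1) • Φ (Rrot^[j+1] k) := by
      intro j _
      rw [phi_comp_tau, eps_rrot_iter, smul_smul, ← pow_succ, Function.iterate_succ_apply']
    rw [Finset.sum_congr rfl hterm]
    have r4' : Rrot (Rrot (Rrot (Rrot k))) = k := by
      obtain ⟨a, b, m⟩ := k; simp [Rrot]
    norm_num [Finset.sum_range_succ, Function.iterate_succ_apply, Function.iterate_zero_apply]
    rw [eps_pow_four k, r4', one_smul]
    abel

lemma star_of_fix {l : (ℤ × ℤ × ℤ) →₀ ℂ}
    (hfix : (Finsupp.linearCombination ℂ Φ l) ∘ tauMap = Finsupp.linearCombination ℂ Φ l) :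
    ∀ w, l (Rrot w) = eps w * l w := by
  classical
  have hker : ∀ c : (ℤ × ℤ × ℤ) →₀ ℂ, Finsupp.linearCombination ℂ Φ c = 0 → c = 0 :=
    linearIndependent_iff.mp phi_linearIndependent
  set l' : (ℤ × ℤ × ℤ) →₀ ℂ := l.sum (fun w a => Finsupp.single (Rrot w) (eps w * a)) with hl'def
  have hcomp : (Finsupp.linearCombination ℂ Φ l) ∘ tauMap = Finsupp.linearCombination ℂ Φ l' := by
    funext p
    have h1 : ((Finsupp.linearCombination ℂ Φ l) ∘ tauMap) p
        = l.sum fun w a => a * Φ w (tauMap p) := by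
      rw [Function.comp_apply, Finsupp.linearCombination_apply, Finsupp.sum_apply']
      exact Finsupp.sum_congr (fun w _ => by simp)
    have h2 : (Finsupp.linearCombination ℂ Φ l') p
        = l.sum fun w a => a * (eps w * Φ (Rrot w) p) := by
      rw [hl'def, map_finsuppSum, Finsupp.sum_apply']
      refine Finsupp.sum_congr (fun w _ => ?_)
      rw [Finsupp.linearCombination_single]
      simp only [Pi.smul_apply, smul_eq_mul]
      ring
    rw [h1, h2]
    refine Finsupp.sum_congr (fun w _ => ?_)
    have hφ := congrFun (phi_comp_tau w) p
    simp only [Function.comp_apply, Pi.smul_apply, smul_eq_mul] at hφ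
    rw [hφ]
  have hll : l' = l := by
    have h0 : Finsupp.linearCombination ℂ Φ (l' - l) = 0 := by
      rw [map_sub, ← hcomp, hfix, sub_self]
    exact sub_eq_zero.mp (hker _ h0)
  intro w
  have hval : l' (Rrot w) = eps w * l w := by
    rw [hl'def]
    rw [Finsupp.sum, Finset.sum_apply']
    have hcong : ∀ u ∈ l.support, (Finsupp.single (Rrot u) (eps u * l u)) (Rrot w)
        = if u = w then eps u * l u else 0 := by
      intro u _
      simp only [Finsupp.single_apply, rrot_inj.eq_iff]
    rw [Finset.sum_congr rfl hcong, Finset.sum_ite_eq' l.support w (fun u => eps u * l u)]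
    split_ifs with hw
    · rfl
    · rw [Finsupp.notMem_support_iff.mp hw, mul_zero]
  conv_lhs => rw [← hll]
  exact hval

lemma star_iter {l : (ℤ × ℤ × ℤ) →₀ ℂ} (hstar : ∀ w, l (Rrot w) = eps w * l w)
    (j : ℕ) (w : ℤ × ℤ × ℤ) : l (Rrot^[j] w) = eps w ^ j * l w := by
  induction j with
  | zero => simp
  | succ n ih =>
    rw [Function.iterate_succ_apply', hstar, eps_rrot_iter, ih, pow_succ]
    ring

lemma fiber_finite (μ : ℝ) : {w : ℤ × ℤ × ℤ | nrm w = μ}.Finite := by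
  set B : ℤ := ⌈μ⌉ with hBdef
  have hsub : {w : ℤ × ℤ × ℤ | nrm w = μ} ⊆
      Set.Icc (-(2*B+1)) (2*B+1) ×ˢ (Set.Icc (-(2*B+1)) (2*B+1) ×ˢ Set.Icc (-(2*B+1)) (2*B+1)) := by
    rintro ⟨a, b, m⟩ h
    simp only [Set.mem_setOf_eq, nrm] at h
    have hμB : μ ≤ (B : ℝ) := Int.le_ceil μ
    have ha2 : ((a^2 : ℤ) : ℝ) ≤ (B : ℝ) := by push_cast; nlinarith [sq_nonneg ((b:ℝ)), sq_nonneg ((m:ℝ)/2)]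
    have hb2 : ((b^2 : ℤ) : ℝ) ≤ (B : ℝ) := by push_cast; nlinarith [sq_nonneg ((a:ℝ)), sq_nonneg ((m:ℝ)/2)]
    have hm2 : ((m^2 : ℤ) : ℝ) ≤ ((4*B : ℤ) : ℝ) := by push_cast; nlinarith [sq_nonneg ((a:ℝ)), sq_nonneg ((b:ℝ))]
    have ha2' : a^2 ≤ B := by exact_mod_cast ha2
    have hb2' : b^2 ≤ B := by exact_mod_cast hb2
    have hm2' : m^2 ≤ 4*B := by exact_mod_cast hm2
    have hB0 : 0 ≤ B := le_trans (sq_nonneg a) ha2'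
    refine ⟨⟨by nlinarith [sq_nonneg (a+1)], by nlinarith [sq_nonneg (a-1)]⟩,
      ⟨by nlinarith [sq_nonneg (b+1)], by nlinarith [sq_nonneg (b-1)]⟩,
      ⟨by nlinarith [sq_nonneg (m+2)], by nlinarith [sq_nonneg (m-2)]⟩⟩
  exact Set.Finite.subset ((Set.finite_Icc _ _).prod ((Set.finite_Icc _ _).prod
    (Set.finite_Icc _ _))) hsub

theorem mT_eq (μ : ℝ) : mT μ = Nat.card {w : ℤ × ℤ × ℤ // nrm w = μ ∧ w ∈ Kset} := by
  classical
  set Kμ : Set (ℤ × ℤ × ℤ) := {w | nrm w = μ ∧ w ∈ Kset} with hKμdef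
  have hfin : Kμ.Finite := (fiber_finite μ).subset (fun w hw => hw.1)
  haveI : Fintype ↥Kμ := hfin.fintype
  have hker : ∀ c : (ℤ × ℤ × ℤ) →₀ ℂ, Finsupp.linearCombination ℂ Φ c = 0 → c = 0 :=
    linearIndependent_iff.mp phi_linearIndependent
  -- the span property
  have hspan : Espace μ ⊓ fixT = Submodule.span ℂ (Set.range (fun k : ↥Kμ => Bfun ↑k)) := by
    apply le_antisymm
    · intro f hf
      have hfE := (Submodule.mem_inf.mp hf).1
      have hfT := (Submodule.mem_inf.mp hf).2
      rw [espace_eq, Finsupp.mem_span_image_iff_linearCombination] at hfE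
      obtain ⟨l, hlsupp, rfl⟩ := hfE
      rw [Finsupp.mem_supported] at hlsupp
      have hstar : ∀ w, l (Rrot w) = eps w * l w := star_of_fix (mem_fixT.mp hfT)
      have hsupp : ∀ w, l w ≠ 0 → nrm w = μ := by
        intro w hw
        exact hlsupp (Finsupp.mem_support_iff.mpr hw)
      have hl_eq : l = ∑ k : ↥Kμ, l ↑k • coefF ↑k := by
        ext x
        rw [Finset.sum_apply']
        simp only [Finsupp.smul_apply, smul_eq_mul]
        by_cases hxμ : nrm x = μ
        · by_cases hxax : x.1 = 0 ∧ x.2.1 = 0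
          · by_cases hx4 : (4:ℤ) ∣ x.2.2
            · have hxK : x ∈ Kμ := ⟨hxμ, Or.inl ⟨hxax.1, hxax.2, hx4⟩⟩
              rw [Finset.sum_eq_single (⟨x, hxK⟩ : ↥Kμ)]
              · rw [coef_self hxK.2, mul_one]
              · intro k _ hne
                rw [coef_other k.2.2 hxK.2 (fun he => hne (Subtype.ext he)), mul_zero]
              · intro h
                exact absurd (Finset.mem_univ _) h
            · have hRx : Rrot x = x := axis_orbit_iter hxax 1
              have h1 : l x = eps x * l x := by
                conv_lhs => rw [← hRx]
                rw [hstar]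
              have h2 : eps x ≠ 1 := fun h => hx4 (I_zpow_eq_one_iff.mp h)
              have hlx : l x = 0 := by
                rcases mul_eq_zero.mp (show (1 - eps x) * l x = 0 by linear_combination h1)
                  with h | h
                · exact absurd (by linear_combination -h) h2
                · exact h
              rw [hlx]
              symm
              refine Finset.sum_eq_zero (fun k _ => ?_)
              have hc : coefF (↑k) x = 0 := by
                by_contra h
                obtain ⟨j, hj, hjx⟩ := coef_spt h
                rcases k.2.2 with hk' | hk'
                · rw [axis_orbit_iter ⟨hk'.1, hk'.2.1⟩ j] at hjx
                  apply hx4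
                  rw [← hjx]
                  exact hk'.2.2
                · exact orbit_not_axis hk'.1 hj (by rw [hjx]; exact hxax)
              rw [hc, mul_zero]
          · obtain ⟨k₀, hk₀rot, j₀, hj₀, hRj₀⟩ := rep_exists hxax
            have hk₀nrm : nrm k₀ = μ := by rw [← nrm_rrot_iter j₀ k₀, hRj₀]; exact hxμ
            have hk₀K : k₀ ∈ Kμ := ⟨hk₀nrm, Or.inr hk₀rot⟩
            have hlhs : l x = eps k₀ ^ j₀ * l k₀ := by
              rw [← hRj₀]
              exact star_iter hstar j₀ k₀
            rw [hlhs]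
            rw [Finset.sum_eq_single (⟨k₀, hk₀K⟩ : ↥Kμ)]
            · rw [show coefF k₀ x = eps k₀ ^ j₀ by rw [← hRj₀]; exact coef_rot_apply hk₀rot hj₀]
              ring
            · intro k _ hne
              have hc : coefF (↑k) x = 0 := by
                by_contra h
                obtain ⟨j, hj, hjx⟩ := coef_spt h
                rcases k.2.2 with hk' | hk'
                · rw [axis_orbit_iter ⟨hk'.1, hk'.2.1⟩ j] at hjx
                  exact hxax (hjx ▸ ⟨hk'.1, hk'.2.1⟩)
                · obtain ⟨hjeq, hkeq⟩ := rep_unique hk' hk₀rot hj hj₀ (by rw [hjx, hRj₀])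
                  exact hne (Subtype.ext hkeq)
              rw [hc, mul_zero]
            · intro h
              exact absurd (Finset.mem_univ _) h
        · have hlx : l x = 0 := by
            by_contra h
            exact hxμ (hsupp x h)
          rw [hlx]
          symm
          refine Finset.sum_eq_zero (fun k _ => ?_)
          have hc : coefF (↑k) x = 0 := by
            by_contra h
            obtain ⟨j, hj, hjx⟩ := coef_spt h
            apply hxμ
            rw [← hjx, nrm_rrot_iter]
            exact k.2.1
          rw [hc, mul_zero]
      have hf_eq : Finsupp.linearCombination ℂ Φ l = ∑ k : ↥Kμ, l ↑k • Bfun ↑k := by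
        conv_lhs => rw [hl_eq]
        rw [map_sum]
        simp only [map_smul]
        rfl
      rw [hf_eq]
      refine Submodule.sum_mem _ (fun k _ => ?_)
      exact Submodule.smul_mem _ _ (Submodule.subset_span ⟨k, rfl⟩)
    · rw [Submodule.span_le]
      rintro _ ⟨k, rfl⟩
      exact Submodule.mem_inf.mpr ⟨Bfun_espace k.2.1, mem_fixT.mpr (Bfun_tau k.2.2)⟩
  have hindep : LinearIndependent ℂ (fun k : ↥Kμ => Bfun ↑k) := by
    rw [linearIndependent_iff']
    intro s g hsum i hi
    have hrepr : (∑ i ∈ s, g i • Bfun ↑i) = Finsupp.linearCombination ℂ Φ (∑ i ∈ s, g i • coefF ↑i) := by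
      rw [map_sum]
      simp only [map_smul]
      rfl
    have hc0 : (∑ i ∈ s, g i • coefF ↑i) = 0 := hker _ (by rw [← hrepr]; exact hsum)
    have hval := congrArg (fun c : (ℤ × ℤ × ℤ) →₀ ℂ => c ↑i) hc0
    simp only [Finset.sum_apply', Finsupp.smul_apply, smul_eq_mul, Finsupp.coe_zero,
      Pi.zero_apply] at hval
    rw [Finset.sum_eq_single i] at hval
    · rw [coef_self i.2.2, mul_one] at hval
      exact hval
    · intro k _ hne
      rw [coef_other k.2.2 i.2.2 (fun he => hne (Subtype.ext he)), mul_zero]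
    · intro h
      exact absurd hi h
  show Module.finrank ℂ ↥(Espace μ ⊓ fixT) = _
  rw [hspan, finrank_span_eq_card hindep]
  exact (Nat.card_eq_fintype_card).symm

lemma summable_exp_sq {c : ℝ} (hc : 0 < c) :
    Summable (fun n : ℤ => Real.exp (-(c * (n:ℝ)^2))) := by
  have hr0 : (0:ℝ) ≤ Real.exp (-c) := (Real.exp_pos _).le
  have hr1 : Real.exp (-c) < 1 := by
    have := Real.exp_lt_exp.mpr (neg_lt_zero.mpr hc)
    rwa [Real.exp_zero] at this
  have hnat : ∀ m : ℕ, Real.exp (-(c * ((m:ℝ))^2)) ≤ (Real.exp (-c))^m := by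
    intro m
    have h1 : Real.exp (-(c * (m:ℝ)^2)) = (Real.exp (-c))^(m^2) := by
      rw [← Real.exp_nat_mul]
      congr 1
      push_cast
      ring
    rw [h1]
    exact pow_le_pow_of_le_one hr0 hr1.le (Nat.le_self_pow two_ne_zero m)
  apply Summable.of_nat_of_neg
  · exact Summable.of_nonneg_of_le (fun n => (Real.exp_pos _).le) (fun m => by exact_mod_cast hnat m)
      (summable_geometric_of_lt_one hr0 hr1)
  · refine Summable.of_nonneg_of_le (fun n => (Real.exp_pos _).le) (fun m => ?_)
      (summable_geometric_of_lt_one hr0 hr1)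
    have h2 : ((-(m:ℤ) : ℤ):ℝ)^2 = ((m:ℝ))^2 := by push_cast; ring
    rw [h2]
    exact hnat m

section Analysis

variable {t : ℝ} (ht : 0 < t)

include ht in
set_option maxHeartbeats 1000000 in
lemma summable_fw : Summable (fun w : ℤ × ℤ × ℤ => Real.exp (-(4*Real.pi^2 * nrm w * t))) := by
  have h1 : Summable (fun n : ℤ => Real.exp (-((4*Real.pi^2*t) * (n:ℝ)^2))) :=
    summable_exp_sq (by positivity)
  have h2 : Summable (fun n : ℤ => Real.exp (-((Real.pi^2*t) * (n:ℝ)^2))) :=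
    summable_exp_sq (by positivity)
  have h23 : Summable (fun u : ℤ × ℤ =>
      Real.exp (-((4*Real.pi^2*t) * (u.1:ℝ)^2)) * Real.exp (-((Real.pi^2*t) * (u.2:ℝ)^2))) :=
    h1.mul_of_nonneg h2 (fun n => (Real.exp_pos _).le) (fun n => (Real.exp_pos _).le)
  have h3 : Summable (fun w : ℤ × ℤ × ℤ => Real.exp (-((4*Real.pi^2*t) * (w.1:ℝ)^2)) *
      (Real.exp (-((4*Real.pi^2*t) * (w.2.1:ℝ)^2)) * Real.exp (-((Real.pi^2*t) * (w.2.2:ℝ)^2)))) :=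
    h1.mul_of_nonneg h23 (fun n => (Real.exp_pos _).le)
      (fun u => mul_nonneg (Real.exp_pos _).le (Real.exp_pos _).le)
  refine h3.congr (fun w => ?_)
  rw [← Real.exp_add, ← Real.exp_add]
  congr 1
  unfold nrm
  ring

def Zax : Set (ℤ × ℤ × ℤ) := {w | w.1 = 0 ∧ w.2.1 = 0}
def K0 : Set (ℤ × ℤ × ℤ) := {w | w.1 = 0 ∧ w.2.1 = 0 ∧ (4:ℤ) ∣ w.2.2}
def Krot : Set (ℤ × ℤ × ℤ) := {w | 0 < w.1 ∧ 0 ≤ w.2.1}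

lemma Kset_eq_union : Kset = K0 ∪ Krot := rfl

lemma K0_Krot_disjoint : Disjoint K0 Krot := by
  rw [Set.disjoint_left]
  rintro w ⟨h1, _, _⟩ ⟨h2, _⟩
  omega

end Analysis

end HTI
end

set_option maxHeartbeats 1000000 in
/-- the heat-trace identity
`K_Tetra − (1/4)·K_TwoTall = K_{ℝ/(1/2)ℤ} − (1/4)·K_{ℝ/2ℤ}` for every `t > 0`,
together with countable support and summability of the spectral sum of Tetra. -/
theorem heat_trace_identity (t : ℝ) (ht : 0 < t) :
    (Function.support fun μ : ℝ => (mT μ : ℝ) * Real.exp (-(4 * Real.pi ^ 2 * μ * t))).Countable ∧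
    Summable (fun μ : ℝ => (mT μ : ℝ) * Real.exp (-(4 * Real.pi ^ 2 * μ * t))) ∧
    (∑' μ : ℝ, (mT μ : ℝ) * Real.exp (-(4 * Real.pi ^ 2 * μ * t)))
        - (1 / 4) * (∑' v : ℤ × ℤ × ℤ, Real.exp (-(4 * Real.pi ^ 2 *
            ((v.1 : ℝ) ^ 2 + (v.2.1 : ℝ) ^ 2 + (v.2.2 : ℝ) ^ 2 / 4) * t)))
      = (∑' n : ℤ, Real.exp (-(16 * Real.pi ^ 2 * (n : ℝ) ^ 2 * t)))
        - (1 / 4) * (∑' n : ℤ, Real.exp (-(Real.pi ^ 2 * (n : ℝ) ^ 2 * t))) := by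
  classical
  set fw : ℤ × ℤ × ℤ → ℝ := fun w => Real.exp (-(4*Real.pi^2 * HTI.nrm w * t)) with hfwdef
  have hfw_sum : Summable fw := HTI.summable_fw ht
  have hfw_pos : ∀ w, 0 < fw w := fun w => Real.exp_pos _
  set F : ℤ × ℤ × ℤ → ℝ := HTI.Kset.indicator fw with hFdef
  have hF_sum : Summable F := hfw_sum.indicator _
  have hfib : HasSum (fun μ : ℝ => ∑' w : HTI.nrm ⁻¹' {μ}, F ↑w) (∑' w, F w) :=
    hF_sum.hasSum.tsum_fiberwise HTI.nrm
  have hinner : ∀ μ : ℝ, (∑' w : HTI.nrm ⁻¹' {μ}, F ↑w)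
      = (mT μ : ℝ) * Real.exp (-(4 * Real.pi ^ 2 * μ * t)) := by
    intro μ
    haveI : Fintype ↥(HTI.nrm ⁻¹' {μ}) := (HTI.fiber_finite μ).fintype
    rw [tsum_fintype]
    have hterm : ∀ w : ↥(HTI.nrm ⁻¹' {μ}), F ↑w =
        if ((w : ℤ × ℤ × ℤ) ∈ HTI.Kset) then Real.exp (-(4 * Real.pi ^ 2 * μ * t)) else 0 := by
      intro w
      by_cases hw : (w : ℤ × ℤ × ℤ) ∈ HTI.Kset
      · rw [if_pos hw, hFdef, Set.indicator_of_mem hw, hfwdef]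
        have hwμ : HTI.nrm ↑w = μ := w.2
        simp only [hwμ]
      · rw [if_neg hw, hFdef, Set.indicator_of_notMem hw]
    rw [Finset.sum_congr rfl (fun w _ => hterm w), ← Finset.sum_filter, Finset.sum_const,
      nsmul_eq_mul]
    have e : {w : ℤ × ℤ × ℤ // HTI.nrm w = μ ∧ w ∈ HTI.Kset}
        ≃ {w : ↥(HTI.nrm ⁻¹' {μ}) // (w : ℤ × ℤ × ℤ) ∈ HTI.Kset} :=
      (Equiv.subtypeSubtypeEquivSubtypeInter (fun w : ℤ × ℤ × ℤ => HTI.nrm w = μ)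
        (fun w => w ∈ HTI.Kset)).symm
    have hcard : (Finset.filter (fun w : ↥(HTI.nrm ⁻¹' {μ}) => (w : ℤ × ℤ × ℤ) ∈ HTI.Kset)
        Finset.univ).card = mT μ := by
      rw [HTI.mT_eq μ, Nat.card_congr e, Nat.card_eq_fintype_card, Fintype.card_subtype]
    rw [hcard]
  have hsummable : Summable (fun μ : ℝ => (mT μ : ℝ) * Real.exp (-(4 * Real.pi ^ 2 * μ * t))) :=
    hfib.summable.congr hinner
  have htsum_mu : (∑' μ : ℝ, (mT μ : ℝ) * Real.exp (-(4 * Real.pi ^ 2 * μ * t))) = ∑' w, F w := by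
    rw [← hfib.tsum_eq]
    exact tsum_congr (fun μ => (hinner μ).symm)
  have hcount : (Function.support fun μ : ℝ =>
      (mT μ : ℝ) * Real.exp (-(4 * Real.pi ^ 2 * μ * t))).Countable := by
    refine Set.Countable.mono ?_ (Set.countable_range HTI.nrm)
    intro μ hμ
    have hm : mT μ ≠ 0 := by
      intro h
      rw [Function.mem_support] at hμ
      exact hμ (by rw [h]; simp)
    rw [HTI.mT_eq μ] at hm
    obtain ⟨⟨w, hw⟩⟩ := (Nat.card_ne_zero.mp hm).1
    exact ⟨w, hw.1⟩
  have hs0 : Summable (HTI.K0.indicator fw) := hfw_sum.indicator _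
  have hsrot : Summable (HTI.Krot.indicator fw) := hfw_sum.indicator _
  have hsZ : Summable (HTI.Zax.indicator fw) := hfw_sum.indicator _
  have hsZc : Summable (HTI.Zaxᶜ.indicator fw) := hfw_sum.indicator _
  have hFsplit : (∑' w, F w)
      = (∑' w, HTI.K0.indicator fw w) + (∑' w, HTI.Krot.indicator fw w) := by
    have hptw : ∀ w, F w = HTI.K0.indicator fw w + HTI.Krot.indicator fw w := by
      intro w
      rw [hFdef, HTI.Kset_eq_union]
      exact congrFun (Set.indicator_union_of_disjoint HTI.K0_Krot_disjoint fw) w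
    rw [tsum_congr hptw]
    exact Summable.tsum_add hs0 hsrot
  -- the K0 sum
  have hinj0 : Function.Injective (fun n : ℤ => ((0, 0, 4*n) : ℤ × ℤ × ℤ)) := by
    intro a b h
    simp only [Prod.mk.injEq] at h
    omega
  have hsupp0 : Function.support (HTI.K0.indicator fw) ⊆
      Set.range (fun n : ℤ => ((0, 0, 4*n) : ℤ × ℤ × ℤ)) := by
    intro w hw
    have hwK : w ∈ HTI.K0 := by
      by_contra h
      exact hw (Set.indicator_of_notMem h fw)
    obtain ⟨a, b, m⟩ := w
    obtain ⟨h1, h2, c, hc⟩ := hwK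
    simp only at h1 h2 hc
    refine Set.mem_range.mpr ⟨c, ?_⟩
    simp [Prod.ext_iff, h1, h2, hc]
  have h0val : (∑' w, HTI.K0.indicator fw w)
      = ∑' n : ℤ, Real.exp (-(16 * Real.pi ^ 2 * (n : ℝ) ^ 2 * t)) := by
    rw [← hinj0.tsum_eq hsupp0]
    refine tsum_congr (fun n => ?_)
    rw [Set.indicator_of_mem (show ((0,0,4*n) : ℤ × ℤ × ℤ) ∈ HTI.K0 from ⟨rfl, rfl, n, rfl⟩), hfwdef]
    show Real.exp (-(4*Real.pi^2 * HTI.nrm (0,0,4*n) * t)) = _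
    congr 1
    unfold HTI.nrm
    push_cast
    ring
  -- the axis sum
  have hinjZ : Function.Injective (fun m : ℤ => ((0, 0, m) : ℤ × ℤ × ℤ)) := by
    intro a b h
    simpa only [Prod.mk.injEq, true_and] using h
  have hsuppZ : Function.support (HTI.Zax.indicator fw) ⊆
      Set.range (fun m : ℤ => ((0, 0, m) : ℤ × ℤ × ℤ)) := by
    intro w hw
    have hwK : w ∈ HTI.Zax := by
      by_contra h
      exact hw (Set.indicator_of_notMem h fw)
    obtain ⟨a, b, m⟩ := w
    obtain ⟨h1, h2⟩ := hwK
    simp only at h1 h2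
    refine Set.mem_range.mpr ⟨m, ?_⟩
    simp [Prod.ext_iff, h1, h2]
  have hZval : (∑' w, HTI.Zax.indicator fw w)
      = ∑' n : ℤ, Real.exp (-(Real.pi ^ 2 * (n : ℝ) ^ 2 * t)) := by
    rw [← hinjZ.tsum_eq hsuppZ]
    refine tsum_congr (fun n => ?_)
    rw [Set.indicator_of_mem (show ((0,0,n) : ℤ × ℤ × ℤ) ∈ HTI.Zax from ⟨rfl, rfl⟩), hfwdef]
    show Real.exp (-(4*Real.pi^2 * HTI.nrm (0,0,n) * t)) = _
    congr 1
    unfold HTI.nrm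
    push_cast
    ring
  -- the fourfold rotational sum
  set H : (Fin 4) × (ℤ × ℤ × ℤ) → ℝ := fun p => HTI.Krot.indicator fw p.2 with hHdef
  have hKrot_of : ∀ p : (Fin 4) × (ℤ × ℤ × ℤ), H p ≠ 0 → p.2 ∈ HTI.Krot := by
    intro p hp
    by_contra hc
    exact hp (Set.indicator_of_notMem hc fw)
  have hH_sum : Summable H := by
    have h1 : Summable (fun _ : Fin 4 => (1:ℝ)) := (hasSum_fintype _).summable
    have h2 := h1.mul_of_nonneg hsrot (fun _ => zero_le_one)
      (fun w => Set.indicator_nonneg (fun x _ => (hfw_pos x).le) w)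
    refine h2.congr (fun p => ?_)
    rw [one_mul]
  have hHtsum : (∑' p, H p) = 4 * ∑' w, HTI.Krot.indicator fw w := by
    rw [Summable.tsum_prod' hH_sum (fun k => hsrot), tsum_fintype]
    have hconst : ∀ k : Fin 4, (∑' w, H (k, w)) = ∑' w, HTI.Krot.indicator fw w := fun _ => rfl
    rw [Finset.sum_congr rfl (fun k _ => hconst k), Finset.sum_const, Finset.card_univ,
      Fintype.card_fin, nsmul_eq_mul]
    norm_num
  have hbij : (∑' x, (HTI.Zaxᶜ.indicator fw) x) = ∑' p, H p := by
    refine tsum_eq_tsum_of_ne_zero_bij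
      (fun x => HTI.Rrot^[((x.val.1 : Fin 4) : ℕ)] x.val.2) ?_ ?_ ?_
    · rintro ⟨⟨j, w⟩, hx⟩ ⟨⟨j', w'⟩, hx'⟩ h
      simp only at h
      have hw : w ∈ HTI.Krot := hKrot_of _ hx
      have hw' : w' ∈ HTI.Krot := hKrot_of _ hx'
      obtain ⟨hj, hww⟩ := HTI.rep_unique hw hw' j.isLt j'.isLt h
      exact Subtype.ext (Prod.ext (Fin.ext hj) hww)
    · intro x hx
      have hxZ : x ∈ HTI.Zaxᶜ := by
        by_contra h
        exact hx (Set.indicator_of_notMem h fw)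
      obtain ⟨k, hkrot, j, hj4, hRjk⟩ := HTI.rep_exists hxZ
      have hne : H (⟨j, hj4⟩, k) ≠ 0 := by
        show HTI.Krot.indicator fw k ≠ 0
        rw [Set.indicator_of_mem (show k ∈ HTI.Krot from hkrot)]
        exact (hfw_pos k).ne'
      exact ⟨⟨(⟨j, hj4⟩, k), hne⟩, hRjk⟩
    · rintro ⟨⟨j, w⟩, hx⟩
      have hw : w ∈ HTI.Krot := hKrot_of _ hx
      show HTI.Zaxᶜ.indicator fw (HTI.Rrot^[(j : ℕ)] w) = HTI.Krot.indicator fw w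
      rw [Set.indicator_of_mem
        (show HTI.Rrot^[(j : ℕ)] w ∈ HTI.Zaxᶜ from HTI.orbit_not_axis hw.1 j.isLt),
        Set.indicator_of_mem hw]
      show Real.exp (-(4*Real.pi^2 * HTI.nrm (HTI.Rrot^[(j : ℕ)] w) * t))
        = Real.exp (-(4*Real.pi^2 * HTI.nrm w * t))
      rw [HTI.nrm_rrot_iter]
  have hcompl : (∑' w, fw w)
      = (∑' w, HTI.Zax.indicator fw w) + (∑' w, HTI.Zaxᶜ.indicator fw w) := by
    rw [← Summable.tsum_add hsZ hsZc]
    refine tsum_congr (fun w => ?_)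
    exact (congrFun (Set.indicator_self_add_compl HTI.Zax fw) w).symm
  have htorus : (∑' v : ℤ × ℤ × ℤ, Real.exp (-(4 * Real.pi ^ 2 *
      ((v.1 : ℝ) ^ 2 + (v.2.1 : ℝ) ^ 2 + (v.2.2 : ℝ) ^ 2 / 4) * t))) = ∑' w, fw w := by
    refine tsum_congr (fun v => ?_)
    rw [hfwdef]
    congr 1
    unfold HTI.nrm
    ring
  refine ⟨hcount, hsummable, ?_⟩
  rw [htsum_mu, hFsplit, htorus, h0val]
  linarith [hHtsum, hbij, hcompl, hZval]
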